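/- Let r ∈ ℕ and let K ⊆ ℝ^{r+1} be a closed nowhere dense set. Then the set {c ∈ ℝ : K ∩ H_c is nowhere dense in the subspace H_c} is comeagre in ℝ. -/

import Mathlib

/-- The hyperplane `H_c = {(x_0, …, x_r) ∈ ℝ^{r+1} : x_r = c}`. -/
def hyperplane (r : ℕ) (c : ℝ) : Set (EuclideanSpace ℝ (Fin (r + 1))) :=
  {x | x (Fin.last r) = c}

/-- The point of `ℝ^{r+1}` with first `r` coordinates `z` and last coordinate `c`. -/
def euclPt (r : ℕ) (z : Fin r → ℝ) (c : ℝ) : EuclideanSpace ℝ (Fin (r + 1)) :=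
  WithLp.toLp 2 (Fin.snoc z c)

lemma continuous_euclPt (r : ℕ) (z : Fin r → ℝ) : Continuous (euclPt r z) := by
  have h : Continuous fun c : ℝ => (Fin.snoc z c : Fin (r + 1) → ℝ) := by
    apply continuous_pi
    intro i
    induction i using Fin.lastCases with
    | last => simpa using continuous_id'
    | cast j => simpa using continuous_const
  exact (EuclideanSpace.equiv (Fin (r + 1)) ℝ).symm.continuous.comp h

/-- The set of `c` such that `K` contains the piece of the hyperplane `H_c` over
the rational box around `a` of radius `ε`. -/
def badSet (r : ℕ) (K : Set (EuclideanSpace ℝ (Fin (r + 1)))) (a : Fin r → ℚ) (ε : ℚ) :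
    Set ℝ :=
  {c | 0 < ε ∧ ∀ z : Fin r → ℝ, (∀ i, dist (z i) ((a i : ℝ)) < (ε : ℝ)) → euclPt r z c ∈ K}

lemma badSet_closed (r : ℕ) (K : Set (EuclideanSpace ℝ (Fin (r + 1)))) (hK : IsClosed K)
    (a : Fin r → ℚ) (ε : ℚ) : IsClosed (badSet r K a ε) := by
  by_cases hε : 0 < ε
  · have : badSet r K a ε =
        ⋂ (z : Fin r → ℝ) (_ : ∀ i, dist (z i) ((a i : ℝ)) < (ε : ℝ)),
          (euclPt r z) ⁻¹' K := by
      ext c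
      simp [badSet, hε]
    rw [this]
    exact isClosed_iInter fun z => isClosed_iInter fun hz => hK.preimage (continuous_euclPt r z)
  · have : badSet r K a ε = ∅ := by
      ext c; simp [badSet, hε]
    rw [this]; exact isClosed_empty

lemma badSet_nowhereDense (r : ℕ) (K : Set (EuclideanSpace ℝ (Fin (r + 1))))
    (hKclosed : IsClosed K) (hKnd : IsNowhereDense K)
    (a : Fin r → ℚ) (ε : ℚ) : IsNowhereDense (badSet r K a ε) := by
  rw [(badSet_closed r K hKclosed a ε).isNowhereDense_iff]
  by_contra h
  obtain ⟨c, hc⟩ := Set.nonempty_iff_ne_empty.mpr h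
  obtain ⟨c₁, c₂, hcc, hIcc⟩ := mem_nhds_iff_exists_Ioo_subset.mp
    (mem_interior_iff_mem_nhds.mp hc)
  have hε : 0 < ε := (hIcc hcc).1
  -- the open box
  set W : Set (EuclideanSpace ℝ (Fin (r + 1))) :=
    (⋂ i : Fin r, (fun x : EuclideanSpace ℝ (Fin (r + 1)) => x (Fin.castSucc i)) ⁻¹'
        Metric.ball ((a i : ℝ)) (ε : ℝ)) ∩
      ((fun x : EuclideanSpace ℝ (Fin (r + 1)) => x (Fin.last r)) ⁻¹' Set.Ioo c₁ c₂) with hW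
  have hWopen : IsOpen W := by
    apply IsOpen.inter
    · exact isOpen_iInter_of_finite fun i =>
        Metric.isOpen_ball.preimage (EuclideanSpace.proj (𝕜 := ℝ) (Fin.castSucc i)).continuous
    · exact isOpen_Ioo.preimage (EuclideanSpace.proj (𝕜 := ℝ) (Fin.last r)).continuous
  have hWne : W.Nonempty := by
    refine ⟨euclPt r (fun i => (a i : ℝ)) c, ?_, ?_⟩
    · simp only [Set.mem_iInter, Set.mem_preimage, Metric.mem_ball]
      intro i
      show dist (euclPt r (fun i => (a i : ℝ)) c (Fin.castSucc i)) _ < _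
      simp [euclPt, Fin.snoc_castSucc]
      exact_mod_cast hε
    · show euclPt r (fun i => (a i : ℝ)) c (Fin.last r) ∈ Set.Ioo c₁ c₂
      simpa [euclPt, Fin.snoc_last] using hcc
  have hWK : W ⊆ K := by
    rintro x ⟨hx1, hx2⟩
    simp only [Set.mem_iInter, Set.mem_preimage, Metric.mem_ball] at hx1 hx2
    have hmem : x (Fin.last r) ∈ badSet r K a ε := hIcc hx2
    have := hmem.2 (Fin.init x) (fun i => hx1 i)
    have hxeq : euclPt r (Fin.init x) (x (Fin.last r)) = x := by
      ext i
      exact congrFun (Fin.snoc_init_self x) i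
    rwa [hxeq] at this
  have : W ⊆ interior (closure K) :=
    interior_maximal (hWK.trans subset_closure) hWopen
  rw [hKnd] at this
  exact hWne.ne_empty (Set.subset_empty_iff.mp this)

/-- If `K ⊆ ℝ^{r+1}` is closed and nowhere dense, then the set of `c ∈ ℝ` such that
`K ∩ H_c` is nowhere dense in the subspace `H_c` is comeagre in ℝ (its complement is
meagre). -/
theorem comeagre_nowhereDense_fibres (r : ℕ)
    (K : Set (EuclideanSpace ℝ (Fin (r + 1))))
    (hKclosed : IsClosed K) (hKnd : IsNowhereDense K) :
    IsMeagre ({c : ℝ |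
      IsNowhereDense {y : ↥(hyperplane r c) | (y : EuclideanSpace ℝ (Fin (r + 1))) ∈ K}}ᶜ) := by
  have hmeagre : IsMeagre (⋃ p : (Fin r → ℚ) × ℚ, badSet r K p.1 p.2) := by
    rw [isMeagre_iff_countable_union_isNowhereDense]
    refine ⟨Set.range (fun p : (Fin r → ℚ) × ℚ => badSet r K p.1 p.2), ?_, ?_, ?_⟩
    · rintro t ⟨p, rfl⟩
      exact badSet_nowhereDense r K hKclosed hKnd p.1 p.2
    · exact Set.countable_range _
    · rw [Set.sUnion_range]
  refine hmeagre.mono ?_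
  intro c hc
  simp only [Set.mem_compl_iff, Set.mem_setOf_eq] at hc
  -- the slice is closed in the subtype
  have hsliceclosed : IsClosed {y : ↥(hyperplane r c) | (y : EuclideanSpace ℝ (Fin (r + 1))) ∈ K} :=
    hKclosed.preimage continuous_subtype_val
  rw [hsliceclosed.isNowhereDense_iff] at hc
  obtain ⟨y, hy⟩ := Set.nonempty_iff_ne_empty.mpr hc
  -- get an open set U in the ambient space
  obtain ⟨t, hsub, hto, hyt⟩ := mem_interior.mp hy
  obtain ⟨U, hUopen, hUeq⟩ := isOpen_induced_iff.mp hto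
  subst hUeq
  have hyU : (y : EuclideanSpace ℝ (Fin (r + 1))) ∈ U := hyt
  -- transfer to the sup metric on the pi type
  set e := (EuclideanSpace.equiv (Fin (r + 1)) ℝ).toHomeomorph with he
  have hVopen : IsOpen (e.symm ⁻¹' U) := hUopen.preimage e.symm.continuous
  have hyV : e (y : EuclideanSpace ℝ (Fin (r + 1))) ∈ e.symm ⁻¹' U := by
    simp [Set.mem_preimage, Homeomorph.symm_apply_apply]; exact hyU
  obtain ⟨ε, hε, hball⟩ := Metric.isOpen_iff.mp hVopen _ hyV
  -- choose rationals
  obtain ⟨δ, hδ0, hδε⟩ := exists_rat_btwn (half_pos hε)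
  have hδ0' : (0 : ℚ) < δ := by exact_mod_cast hδ0
  have hcoord : ∀ i : Fin r, ∃ q : ℚ,
      dist ((q : ℝ)) ((y : EuclideanSpace ℝ (Fin (r + 1))) (Fin.castSucc i)) < (δ : ℝ) := by
    intro i
    obtain ⟨q, hq1, hq2⟩ := exists_rat_btwn
      (show (y : EuclideanSpace ℝ (Fin (r + 1))) (Fin.castSucc i) - (δ : ℝ) <
        (y : EuclideanSpace ℝ (Fin (r + 1))) (Fin.castSucc i) by linarith)
    exact ⟨q, by rw [Real.dist_eq, abs_lt]; constructor <;> linarith⟩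
  choose a ha using hcoord
  refine Set.mem_iUnion.mpr ⟨(a, δ), hδ0', ?_⟩
  intro z hz
  -- show the point is in K
  have hlast : (y : EuclideanSpace ℝ (Fin (r + 1))) (Fin.last r) = c := y.2
  have hdist : ∀ i : Fin (r + 1),
      dist ((e (euclPt r z c)) i) ((e (y : EuclideanSpace ℝ (Fin (r + 1)))) i) < ε := by
    intro i
    induction i using Fin.lastCases with
    | last =>
      show dist (euclPt r z c (Fin.last r)) ((y : EuclideanSpace ℝ (Fin (r + 1))) (Fin.last r)) < ε
      simp [euclPt, Fin.snoc_last, hlast, hε]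
    | cast j =>
      show dist (euclPt r z c (Fin.castSucc j))
        ((y : EuclideanSpace ℝ (Fin (r + 1))) (Fin.castSucc j)) < ε
      have h1 : euclPt r z c (Fin.castSucc j) = z j := by simp [euclPt, Fin.snoc_castSucc]
      rw [h1]
      calc dist (z j) ((y : EuclideanSpace ℝ (Fin (r + 1))) (Fin.castSucc j))
          ≤ dist (z j) ((a j : ℝ)) +
            dist ((a j : ℝ)) ((y : EuclideanSpace ℝ (Fin (r + 1))) (Fin.castSucc j)) :=
            dist_triangle _ _ _
        _ < (δ : ℝ) + (δ : ℝ) := add_lt_add (hz j) (ha j)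
        _ < ε := by linarith
  have hptU : euclPt r z c ∈ U := by
    have : e (euclPt r z c) ∈ Metric.ball (e (y : EuclideanSpace ℝ (Fin (r + 1)))) ε :=
      (dist_pi_lt_iff hε).mpr hdist
    have := hball this
    simpa [Set.mem_preimage, Homeomorph.symm_apply_apply] using this
  have hptH : euclPt r z c ∈ hyperplane r c := by
    show euclPt r z c (Fin.last r) = c
    simp [euclPt, Fin.snoc_last]
  exact hsub (show (⟨euclPt r z c, hptH⟩ : ↥(hyperplane r c)) ∈ _ from hptU)
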